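/- arXiv:1009.2937 — 2 statements merged into one kernel-verified Lean document; each statement's English description precedes it below -/
import Mathlib

section
/- For every real number x ≥ 1 there is a plan with x tankloads in the single-jeep model that reaches a state in which the jeep's position equals G(x) and subsequently reaches a state in which the jeep's position equals 0; that is, with x tankloads the jeep can make a round trip to distance G(x). -/
/-- A state of the single-jeep model: the jeep's position, the fuel in its
tank, and a finitely supported function recording the fuel in depots. -/
structure JeepState where
  pos : ℝ
  tank : ℝ
  depot : ℝ →₀ ℝ

/-- Admissible moves of the single-jeep model: either drive (consuming one
tankload per unit of distance), or transfer fuel between the tank and the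
depot at the jeep's current position. -/
inductive JeepStep : JeepState → JeepState → Prop
  | drive (s : JeepState) (p' : ℝ)
      (h : 0 ≤ s.tank - |p' - s.pos|) :
      JeepStep s ⟨p', s.tank - |p' - s.pos|, s.depot⟩
  | transfer (s : JeepState) (t' : ℝ) (D' : ℝ →₀ ℝ)
      (hcons : t' + D' s.pos = s.tank + s.depot s.pos)
      (ht0 : 0 ≤ t') (ht1 : t' ≤ 1)
      (hD : ∀ q, 0 ≤ D' q)
      (heq : ∀ q, q ≠ s.pos → D' q = s.depot q) :
      JeepStep s ⟨s.pos, t', D'⟩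

/-- The initial state of a plan with `x` tankloads: the jeep is at `0` with an
empty tank, and `x` tankloads of fuel are stored at position `0`. -/
noncomputable def jeepInit (x : ℝ) : JeepState :=
  ⟨0, 0, Finsupp.single 0 x⟩

/-- `G x = Σ_{k=1}^{⌈x⌉−1} 1/(2k) + (x − ⌈x⌉ + 1)/(2⌈x⌉)`. -/
noncomputable def G (x : ℝ) : ℝ :=
  (∑ k ∈ Finset.Icc 1 (⌈x⌉₊ - 1), 1 / (2 * (k : ℝ))) +
    (x - ⌈x⌉₊ + 1) / (2 * (⌈x⌉₊ : ℝ))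

section JeepAux

open Finsupp

private lemma jeep_drive' (p t : ℝ) (D : ℝ →₀ ℝ) (p' t' : ℝ)
    (h : t' = t - |p' - p|) (h0 : 0 ≤ t') :
    JeepStep ⟨p, t, D⟩ ⟨p', t', D⟩ := by
  subst h
  exact JeepStep.drive ⟨p, t, D⟩ p' h0

private lemma jeep_transfer' (p t : ℝ) (D : ℝ →₀ ℝ) (t' : ℝ) (D' : ℝ →₀ ℝ)
    (hcons : t' + D' p = t + D p)
    (ht0 : 0 ≤ t') (ht1 : t' ≤ 1)
    (hD : ∀ q, 0 ≤ D' q)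
    (heq : ∀ q, q ≠ p → D' q = D q) :
    JeepStep ⟨p, t, D⟩ ⟨p, t', D'⟩ :=
  JeepStep.transfer ⟨p, t, D⟩ t' D' hcons ht0 ht1 hD heq

private lemma G_of_ceil_one (y : ℝ) (h : ⌈y⌉₊ = 1) : G y = y / 2 := by
  simp [G, h]

private lemma G_nat (N : ℕ) (hN : 1 ≤ N) :
    G (N : ℝ) = ∑ k ∈ Finset.Icc 1 N, 1 / (2 * (k : ℝ)) := by
  obtain ⟨M, rfl⟩ : ∃ M, N = M + 1 := ⟨N - 1, by omega⟩
  rw [G, Nat.ceil_natCast, Finset.sum_Icc_succ_top (by omega)]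
  have : (M + 1 : ℕ) - 1 = M := by omega
  rw [this]
  push_cast
  ring

private lemma G_succ (y : ℝ) (N : ℕ) (hN : 1 ≤ N) (h : ⌈y⌉₊ = N + 1) :
    G y = (y - N) / (2 * ((N : ℝ) + 1)) + G (N : ℝ) := by
  rw [G_nat N hN, G, h]
  have : (N + 1 : ℕ) - 1 = N := by omega
  rw [this]
  push_cast
  ring

/-- The shuttle phase: `i` round trips over a first segment of length `δ`,
each time carrying one tankload forward and depositing `1 - 2δ`. -/
private lemma jeep_shuttle (p δ : ℝ) (E : ℝ →₀ ℝ) (hE : ∀ q, 0 ≤ E q)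
    (hδ0 : 0 < δ) (hδ1 : 2 * δ ≤ 1) (N : ℕ) (y : ℝ) (hy : (N : ℝ) ≤ y) :
    ∀ i : ℕ, i ≤ N →
    Relation.ReflTransGen JeepStep ⟨p, 0, E + Finsupp.single p y⟩
      ⟨p, 0, E + Finsupp.single p (y - i) + Finsupp.single (p + δ) (i * (1 - 2 * δ))⟩ := by
  have hpc : p ≠ p + δ := by intro h; nlinarith [h]
  intro i
  induction i with
  | zero =>
    intro _
    simp only [Nat.cast_zero, sub_zero, CharP.cast_eq_zero, zero_mul,
      Finsupp.single_zero, add_zero]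
    exact Relation.ReflTransGen.refl
  | succ i ih =>
    intro hi
    have hiN : (i : ℝ) + 1 ≤ N := by exact_mod_cast hi
    have h1 : (1 : ℝ) ≤ y - i := by linarith
    have h2δ : (0:ℝ) ≤ 1 - 2 * δ := by linarith
    have h0i : (0:ℝ) ≤ (i : ℝ) := Nat.cast_nonneg i
    push_cast
    -- load a full tank at p
    have step1 : JeepStep
        ⟨p, 0, E + Finsupp.single p (y - i) + Finsupp.single (p + δ) (i * (1 - 2 * δ))⟩
        ⟨p, 1, E + Finsupp.single p (y - ((i : ℝ) + 1)) + Finsupp.single (p + δ) (i * (1 - 2 * δ))⟩ := by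
      refine jeep_transfer' p 0 _ 1 _ ?_ (by norm_num) (by norm_num) ?_ ?_
      · simp only [Finsupp.add_apply, Finsupp.single_eq_same,
          Finsupp.single_eq_of_ne' (Ne.symm hpc)]
        ring
      · intro q
        by_cases hq : q = p
        · rw [hq]
          simp only [Finsupp.add_apply, Finsupp.single_eq_same,
            Finsupp.single_eq_of_ne' (Ne.symm hpc)]
          nlinarith [hE p]
        · by_cases hq2 : q = p + δ
          · rw [hq2]
            simp only [Finsupp.add_apply, Finsupp.single_eq_same,
              Finsupp.single_eq_of_ne' hpc]
            nlinarith [hE (p + δ)]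
          · simp only [Finsupp.add_apply, Finsupp.single_eq_of_ne' (Ne.symm hq),
              Finsupp.single_eq_of_ne' (fun h => hq2 h.symm), add_zero]
            exact hE q
      · intro q hq
        simp only [Finsupp.add_apply, Finsupp.single_eq_of_ne' (Ne.symm hq), add_zero]
    -- drive to p + δ
    have step2 : JeepStep
        ⟨p, 1, E + Finsupp.single p (y - ((i : ℝ) + 1)) + Finsupp.single (p + δ) (i * (1 - 2 * δ))⟩
        ⟨p + δ, 1 - δ, E + Finsupp.single p (y - ((i : ℝ) + 1)) + Finsupp.single (p + δ) (i * (1 - 2 * δ))⟩ := by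
      refine jeep_drive' p 1 _ (p + δ) (1 - δ) ?_ (by linarith)
      rw [show p + δ - p = δ by ring, abs_of_nonneg hδ0.le]
    -- deposit, keeping δ in the tank
    have step3 : JeepStep
        ⟨p + δ, 1 - δ, E + Finsupp.single p (y - ((i : ℝ) + 1)) + Finsupp.single (p + δ) (i * (1 - 2 * δ))⟩
        ⟨p + δ, δ, E + Finsupp.single p (y - ((i : ℝ) + 1)) + Finsupp.single (p + δ) (((i : ℝ) + 1) * (1 - 2 * δ))⟩ := by
      refine jeep_transfer' (p + δ) (1 - δ) _ δ _ ?_ (by linarith) (by linarith) ?_ ?_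
      · simp only [Finsupp.add_apply, Finsupp.single_eq_same,
          Finsupp.single_eq_of_ne' hpc]
        ring
      · intro q
        by_cases hq : q = p
        · rw [hq]
          simp only [Finsupp.add_apply, Finsupp.single_eq_same,
            Finsupp.single_eq_of_ne' (Ne.symm hpc)]
          nlinarith [hE p]
        · by_cases hq2 : q = p + δ
          · rw [hq2]
            simp only [Finsupp.add_apply, Finsupp.single_eq_same,
              Finsupp.single_eq_of_ne' hpc]
            nlinarith [hE (p + δ)]
          · simp only [Finsupp.add_apply, Finsupp.single_eq_of_ne' (Ne.symm hq),
              Finsupp.single_eq_of_ne' (fun h => hq2 h.symm), add_zero]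
            exact hE q
      · intro q hq
        simp only [Finsupp.add_apply, Finsupp.single_eq_of_ne' (Ne.symm hq), add_zero]
    -- drive back to p
    have step4 : JeepStep
        ⟨p + δ, δ, E + Finsupp.single p (y - ((i : ℝ) + 1)) + Finsupp.single (p + δ) (((i : ℝ) + 1) * (1 - 2 * δ))⟩
        ⟨p, 0, E + Finsupp.single p (y - ((i : ℝ) + 1)) + Finsupp.single (p + δ) (((i : ℝ) + 1) * (1 - 2 * δ))⟩ := by
      refine jeep_drive' (p + δ) δ _ p 0 ?_ le_rfl
      rw [show p - (p + δ) = -δ by ring, abs_neg, abs_of_nonneg hδ0.le]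
      ring
    exact ((((ih (by omega)).tail step1).tail step2).tail step3).tail step4

/-- Main inductive lemma: from position `p` with an empty tank, `y` tankloads
stored at `p` (with `⌈y⌉ = n+1`), and arbitrary extra nonnegative depots `E`,
the jeep can reach position `p + G y` and then return exactly to the state
`⟨p, 0, E⟩`. -/
private lemma jeep_main (n : ℕ) : ∀ (y : ℝ), 1 ≤ y → ⌈y⌉₊ = n + 1 →
    ∀ (p : ℝ) (E : ℝ →₀ ℝ), (∀ q, 0 ≤ E q) →
    ∃ s₁ : JeepState,
      Relation.ReflTransGen JeepStep ⟨p, 0, E + Finsupp.single p y⟩ s₁ ∧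
      Relation.ReflTransGen JeepStep s₁ ⟨p, 0, E⟩ ∧
      s₁.pos = p + G y := by
  induction n with
  | zero =>
    intro y hy1 hceil p E hE
    have hy2 : y ≤ 1 := by
      have h := ((Nat.ceil_eq_iff (by norm_num)).mp hceil).2
      simpa using h
    refine ⟨⟨p + y / 2, y / 2, E⟩, ?_, ?_, ?_⟩
    · have step1 : JeepStep ⟨p, 0, E + Finsupp.single p y⟩ ⟨p, y, E⟩ := by
        refine jeep_transfer' p 0 _ y E ?_ (by linarith) hy2 hE ?_
        · simp only [Finsupp.add_apply, Finsupp.single_eq_same]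
          ring
        · intro q hq
          simp only [Finsupp.add_apply, Finsupp.single_eq_of_ne' (Ne.symm hq), add_zero]
      have step2 : JeepStep ⟨p, y, E⟩ ⟨p + y / 2, y / 2, E⟩ := by
        refine jeep_drive' p y E _ _ ?_ (by linarith)
        rw [show p + y / 2 - p = y / 2 by ring, abs_of_nonneg (by linarith)]
        ring
      exact (Relation.ReflTransGen.single step1).tail step2
    · have step3 : JeepStep ⟨p + y / 2, y / 2, E⟩ ⟨p, 0, E⟩ := by
        refine jeep_drive' (p + y / 2) (y / 2) E p 0 ?_ le_rfl
        rw [show p - (p + y / 2) = -(y / 2) by ring, abs_neg,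
          abs_of_nonneg (by linarith)]
        ring
      exact Relation.ReflTransGen.single step3
    · simp [G_of_ceil_one y hceil]
  | succ n ih =>
    intro y hy1 hceil p E hE
    obtain ⟨hlow, hhigh⟩ := (Nat.ceil_eq_iff (by omega)).mp hceil
    have hlow' : (n : ℝ) + 1 < y := by
      have : ((n + 1 + 1 - 1 : ℕ) : ℝ) < y := by exact_mod_cast hlow
      simpa using this
    have hhigh' : y ≤ (n : ℝ) + 2 := by
      have : y ≤ ((n + 1 + 1 : ℕ) : ℝ) := by exact_mod_cast hhigh
      push_cast at this
      linarith
    set δ : ℝ := (y - ((n : ℝ) + 1)) / (2 * ((n : ℝ) + 2)) with hδdef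
    have hn0 : (0 : ℝ) ≤ (n : ℝ) := Nat.cast_nonneg n
    have hδ0 : 0 < δ := by
      apply div_pos (by linarith)
      linarith
    have hr2 : 2 * ((n : ℝ) + 2) * δ = y - ((n : ℝ) + 1) := by
      rw [hδdef]
      field_simp
    have hδ1 : 2 * δ ≤ 1 := by nlinarith
    have hδr : δ ≤ y - ((n : ℝ) + 1) := by nlinarith
    have hpc : p ≠ p + δ := by intro h; nlinarith [h]
    -- the shuttle phase: n+1 round trips over [p, p+δ]
    have shuttle := jeep_shuttle p δ E hE hδ0 hδ1 (n + 1) y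
      (by push_cast; linarith) (n + 1) le_rfl
    push_cast at shuttle
    -- load the remaining fuel
    have stepE : JeepStep
        ⟨p, 0, E + Finsupp.single p (y - ((n : ℝ) + 1)) +
          Finsupp.single (p + δ) (((n : ℝ) + 1) * (1 - 2 * δ))⟩
        ⟨p, y - ((n : ℝ) + 1), E + Finsupp.single (p + δ) (((n : ℝ) + 1) * (1 - 2 * δ))⟩ := by
      refine jeep_transfer' p 0 _ _ _ ?_ (by linarith) (by linarith) ?_ ?_
      · simp only [Finsupp.add_apply, Finsupp.single_eq_same,
          Finsupp.single_eq_of_ne' (Ne.symm hpc)]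
        ring
      · intro q
        by_cases hq2 : q = p + δ
        · rw [hq2]
          simp only [Finsupp.add_apply, Finsupp.single_eq_same]
          nlinarith [hE (p + δ)]
        · simp only [Finsupp.add_apply,
            Finsupp.single_eq_of_ne' (fun h => hq2 h.symm), add_zero]
          exact hE q
      · intro q hq
        simp only [Finsupp.add_apply, Finsupp.single_eq_of_ne' (Ne.symm hq), add_zero]
    -- drive to p + δ
    have stepF : JeepStep
        ⟨p, y - ((n : ℝ) + 1), E + Finsupp.single (p + δ) (((n : ℝ) + 1) * (1 - 2 * δ))⟩
        ⟨p + δ, y - ((n : ℝ) + 1) - δ,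
          E + Finsupp.single (p + δ) (((n : ℝ) + 1) * (1 - 2 * δ))⟩ := by
      refine jeep_drive' p _ _ (p + δ) _ ?_ (by linarith)
      rw [show p + δ - p = δ by ring, abs_of_nonneg hδ0.le]
    -- deposit everything at p + δ
    have stepG : JeepStep
        ⟨p + δ, y - ((n : ℝ) + 1) - δ,
          E + Finsupp.single (p + δ) (((n : ℝ) + 1) * (1 - 2 * δ))⟩
        ⟨p + δ, 0, E + Finsupp.single (p + δ) δ + Finsupp.single (p + δ) ((n : ℝ) + 1)⟩ := by
      refine jeep_transfer' (p + δ) _ _ 0 _ ?_ le_rfl (by norm_num) ?_ ?_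
      · simp only [Finsupp.add_apply, Finsupp.single_eq_same]
        nlinarith [hr2]
      · intro q
        by_cases hq2 : q = p + δ
        · rw [hq2]
          simp only [Finsupp.add_apply, Finsupp.single_eq_same]
          nlinarith [hE (p + δ)]
        · simp only [Finsupp.add_apply,
            Finsupp.single_eq_of_ne' (fun h => hq2 h.symm), add_zero]
          exact hE q
      · intro q hq
        simp only [Finsupp.add_apply, Finsupp.single_eq_of_ne' (fun h => hq h.symm),
          add_zero]
    -- recursive round trip from p + δ with n+1 tankloads
    have hE' : ∀ q, 0 ≤ (E + Finsupp.single (p + δ) δ) q := by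
      intro q
      rw [Finsupp.add_apply, Finsupp.single_apply]
      split
      · nlinarith [hE q]
      · simpa using hE q
    obtain ⟨s₁, hA, hB, hpos⟩ := ih ((n + 1 : ℕ) : ℝ)
      (by exact_mod_cast Nat.succ_le_succ (Nat.zero_le n)) (Nat.ceil_natCast _)
      (p + δ) (E + Finsupp.single (p + δ) δ) hE'
    have hGn : G ((n + 1 : ℕ) : ℝ) = G ((n : ℝ) + 1) := by push_cast; ring_nf
    push_cast at hA hB hpos
    -- pick up the reserved fuel and return to p
    have stepI : JeepStep ⟨p + δ, 0, E + Finsupp.single (p + δ) δ⟩ ⟨p + δ, δ, E⟩ := by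
      refine jeep_transfer' (p + δ) 0 _ δ E ?_ hδ0.le (by linarith) hE ?_
      · simp only [Finsupp.add_apply, Finsupp.single_eq_same]
        ring
      · intro q hq
        simp only [Finsupp.add_apply, Finsupp.single_eq_of_ne' (fun h => hq h.symm),
          add_zero]
    have stepJ : JeepStep ⟨p + δ, δ, E⟩ ⟨p, 0, E⟩ := by
      refine jeep_drive' (p + δ) δ E p 0 ?_ le_rfl
      rw [show p - (p + δ) = -δ by ring, abs_neg, abs_of_nonneg hδ0.le]
      ring
    refine ⟨s₁, ?_, ?_, ?_⟩
    · exact (((shuttle.tail stepE).tail stepF).tail stepG).trans hA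
    · exact (hB.tail stepI).tail stepJ
    · rw [hpos, G_succ y (n + 1) (by omega) hceil]
      push_cast
      rw [hδdef]
      ring

end JeepAux

/-- For every `x ≥ 1` there is a plan with `x` tankloads that reaches a state
with jeep position `G x` and subsequently reaches a state with jeep
position `0`: the jeep can make a round trip to distance `G x`. -/
theorem jeep_roundtrip_reachable (x : ℝ) (hx : 1 ≤ x) :
    ∃ s₁ s₂ : JeepState,
      Relation.ReflTransGen JeepStep (jeepInit x) s₁ ∧
      Relation.ReflTransGen JeepStep s₁ s₂ ∧
      s₁.pos = G x ∧ s₂.pos = 0 := by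
  have hc1 : 1 ≤ ⌈x⌉₊ := Nat.one_le_ceil_iff.mpr (by linarith)
  obtain ⟨n, hn⟩ : ∃ n, ⌈x⌉₊ = n + 1 := ⟨⌈x⌉₊ - 1, by omega⟩
  obtain ⟨s₁, h1, h2, h3⟩ := jeep_main n x hx hn 0 0 (fun q => le_rfl)
  refine ⟨s₁, ⟨0, 0, 0⟩, ?_, h2, by simpa using h3, rfl⟩
  have : jeepInit x = ⟨0, 0, (0 : ℝ →₀ ℝ) + Finsupp.single 0 x⟩ := by
    simp [jeepInit]
  rw [this]
  exact h1
end

section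
/- For every real number x ≥ 1 and every plan with x tankloads in the single-jeep model, if the plan reaches a state with jeep position d and subsequently reaches a state with jeep position 0, then d ≤ G(x); that is, a single jeep with x tankloads cannot make a round trip to any distance exceeding G(x). -/
namespace JeepAux

open MeasureTheory
open scoped ENNReal

/-- length of the part of segment `s` lying to the right of `y` -/
noncomputable def seglen (y : ℝ) (s : ℝ × ℝ) : ℝ :=
  max (max s.1 s.2 - max y (min s.1 s.2)) 0

noncomputable def consum (y : ℝ) (l : List (ℝ × ℝ)) : ℝ := (l.map (seglen y)).sum

noncomputable def Rcnt (y : ℝ) (l : List (ℝ × ℝ)) : ℕ :=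
  l.countP (fun s => decide (s.1 ≤ y ∧ y < s.2))

noncomputable def Lcnt (y : ℝ) (l : List (ℝ × ℝ)) : ℕ :=
  l.countP (fun s => decide (s.2 ≤ y ∧ y < s.1))

def chainP : ℝ → List (ℝ × ℝ) → ℝ → Prop
  | a, [], b => a = b
  | a, s :: t, b => a = s.1 ∧ chainP s.2 t b

noncomputable def W (y : ℝ) (s : JeepState) : ℝ :=
  (if y < s.pos then s.tank else 0) +
    ∑ q ∈ s.depot.support, (if y < q then s.depot q else 0)

noncomputable def total (s : JeepState) : ℝ := s.tank + ∑ q ∈ s.depot.support, s.depot q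

noncomputable def lensum (l : List (ℝ × ℝ)) : ℝ := (l.map (fun s => |s.2 - s.1|)).sum

def Good (s : JeepState) : Prop := 0 ≤ s.tank ∧ s.tank ≤ 1 ∧ ∀ q, 0 ≤ s.depot q

lemma seglen_nonneg (y : ℝ) (s : ℝ × ℝ) : 0 ≤ seglen y s := le_max_right _ _

lemma seglen_le (y : ℝ) (s : ℝ × ℝ) : seglen y s ≤ |s.2 - s.1| := by
  rw [abs_sub_comm]
  rcases le_total s.1 s.2 with h | h <;>
    simp [seglen, max_def, min_def, h, abs_of_nonneg, abs_of_nonpos, sub_nonneg,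
      sub_nonpos] <;> split_ifs <;> linarith [le_max_left y s.1, le_max_left y s.2]

lemma consum_nonneg (y : ℝ) (l : List (ℝ × ℝ)) : 0 ≤ consum y l := by
  apply List.sum_nonneg; intro a ha
  obtain ⟨s, _, rfl⟩ := List.mem_map.1 ha
  exact seglen_nonneg _ _

lemma consum_le_lensum (y : ℝ) (l : List (ℝ × ℝ)) : consum y l ≤ lensum l := by
  unfold consum lensum
  induction l with
  | nil => simp
  | cons s t ih => simpa using add_le_add (seglen_le y s) ih

lemma seglen_anti (s : ℝ × ℝ) : Antitone (fun y => seglen y s) := by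
  intro a b hab
  simp only [seglen]
  apply max_le_max_right
  have : max a (min s.1 s.2) ≤ max b (min s.1 s.2) := max_le_max_right _ hab
  linarith

lemma consum_anti (l : List (ℝ × ℝ)) : Antitone (fun y => consum y l) := by
  induction l with
  | nil => intro a b _; simp [consum]
  | cons s t ih =>
    intro a b hab
    simpa [consum] using add_le_add (seglen_anti s hab) (ih hab)

lemma consum_cont (l : List (ℝ × ℝ)) : Continuous (fun y => consum y l) := by
  induction l with
  | nil => simpa [consum] using continuous_const
  | cons s t ih =>
    have h1 : Continuous (fun y => seglen y s) := by
      unfold seglen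
      exact (continuous_const.sub (continuous_id.max continuous_const)).max continuous_const
    simp only [consum, List.map_cons, List.sum_cons]; exact h1.add ih

lemma chainP_append {a b c : ℝ} {l l' : List (ℝ × ℝ)} (h : chainP a l b) (h' : chainP b l' c) :
    chainP a (l ++ l') c := by
  induction l generalizing a with
  | nil => have : a = b := h; subst this; simpa using h'
  | cons s t ih => exact ⟨h.1, ih h.2⟩

lemma chainP_cross {a b y : ℝ} {l : List (ℝ × ℝ)} (h : chainP a l b) (h1 : a ≤ y) (h2 : y < b) :
    1 ≤ Rcnt y l := by
  induction l generalizing a with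
  | nil => have : a = b := h; exact absurd (this ▸ h2) (not_lt.2 h1)
  | cons s t ih =>
    obtain ⟨rfl, hc⟩ := h
    by_cases hy : y < s.2
    · have hh : (fun s : ℝ × ℝ => decide (s.1 ≤ y ∧ y < s.2)) s = true := by
        simp [h1, hy]
      simp only [Rcnt, List.countP_cons, hh, if_true]
      omega
    · have := ih hc (not_lt.1 hy)
      simp only [Rcnt, List.countP_cons] at *
      omega

lemma cross_local (p q y : ℝ) :
    (if p ≤ y ∧ y < q then (1:ℤ) else 0) + (if y < p then 1 else 0) =
      (if q ≤ y ∧ y < p then 1 else 0) + (if y < q then 1 else 0) := by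
  rcases lt_or_ge y p with h1 | h1 <;> rcases lt_or_ge y q with h2 | h2
  · simp [h1, h2, not_le_of_gt h1, not_le_of_gt h2]
  · simp [h1, h2, not_le_of_gt h1, not_lt_of_ge h2]
  · simp [h2, not_lt_of_ge h1, not_le_of_gt h2]
  · simp [not_lt_of_ge h1, not_lt_of_ge h2]

lemma chainP_RL {a b : ℝ} {l : List (ℝ × ℝ)} (h : chainP a l b) (y : ℝ) :
    (Rcnt y l : ℤ) + (if y < a then 1 else 0) = (Lcnt y l : ℤ) + (if y < b then 1 else 0) := by
  induction l generalizing a with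
  | nil => have : a = b := h; subst this; rfl
  | cons s t ih =>
    obtain ⟨rfl, hc⟩ := h
    have IH := ih hc
    have cl := cross_local s.1 s.2 y
    simp only [Rcnt, Lcnt, List.countP_cons, decide_eq_true_eq] at IH ⊢
    push_cast
    linarith [cl]

lemma sum_off {D D' : ℝ →₀ ℝ} {p : ℝ} (h : ∀ q, q ≠ p → D' q = D q) (f : ℝ → ℝ → ℝ)
    (hf : ∀ q, f q 0 = 0) :
    (∑ q ∈ D'.support, f q (D' q)) = (∑ q ∈ D.support, f q (D q)) + f p (D' p) - f p (D p) := by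
  classical
  set u : Finset ℝ := D.support ∪ D'.support ∪ {p} with hu
  have hpu : p ∈ u := by simp [hu]
  have hsub1 : D'.support ⊆ u := Finset.Subset.trans Finset.subset_union_right
    Finset.subset_union_left
  have hsub2 : D.support ⊆ u := Finset.Subset.trans Finset.subset_union_left
    Finset.subset_union_left
  have e1 : (∑ q ∈ D'.support, f q (D' q)) = ∑ q ∈ u, f q (D' q) :=
    Finset.sum_subset hsub1 (fun q _ hq => by rw [Finsupp.notMem_support_iff.1 hq, hf])
  have e2 : (∑ q ∈ D.support, f q (D q)) = ∑ q ∈ u, f q (D q) :=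
    Finset.sum_subset hsub2 (fun q _ hq => by rw [Finsupp.notMem_support_iff.1 hq, hf])
  have e3 : ∑ q ∈ u, (f q (D' q) - f q (D q)) = f p (D' p) - f p (D p) := by
    refine Finset.sum_eq_single_of_mem p hpu ?_
    intro q _ hne
    rw [h q hne]; ring
  rw [Finset.sum_sub_distrib] at e3
  rw [e1, e2]; linarith

lemma key_drive (p q t y : ℝ) (ht1 : t ≤ 1) (hge : |q - p| ≤ t) :
    (if y < q then t - |q - p| else 0) + max (max p q - max y (min p q)) 0
      ≤ (if y < p then t else 0) + (if p ≤ y ∧ y < q then 1 else 0) := by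
  have h0 : (0:ℝ) ≤ |q - p| := abs_nonneg _
  rcases le_total p q with hpq | hpq
  · rw [abs_of_nonneg (sub_nonneg.2 hpq)] at hge ⊢
    rw [min_eq_left hpq, max_eq_right hpq]
    rcases le_or_gt p y with hp | hp
    · rw [max_eq_left hp]
      rcases le_or_gt q y with hq | hq
      · rw [max_eq_right (by linarith : q - y ≤ 0)]
        split_ifs <;> simp_all <;> linarith
      · rw [max_eq_left (by linarith : (0:ℝ) ≤ q - y)]
        split_ifs <;> simp_all <;> linarith
    · rw [max_eq_right hp.le, max_eq_left (by linarith : (0:ℝ) ≤ q - p)]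
      split_ifs <;> simp_all <;> linarith
  · rw [abs_of_nonpos (sub_nonpos.2 hpq)] at hge ⊢
    rw [min_eq_right hpq, max_eq_left hpq]
    have hcr : ¬(p ≤ y ∧ y < q) := by
      rintro ⟨hh1, hh2⟩; exact absurd (hh2.trans_le (hpq.trans hh1)) (lt_irrefl y)
    rw [if_neg hcr]
    rcases le_or_gt q y with hq | hq
    · rw [max_eq_left hq]
      rcases le_or_gt p y with hp | hp
      · rw [max_eq_right (by linarith : p - y ≤ 0)]
        split_ifs <;> simp_all <;> linarith
      · rw [max_eq_left (by linarith : (0:ℝ) ≤ p - y)]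
        split_ifs <;> simp_all <;> linarith
    · rw [max_eq_right hq.le, max_eq_left (by linarith : (0:ℝ) ≤ p - q)]
      split_ifs <;> simp_all <;> linarith

lemma step_lemma {b c : JeepState} (h : JeepStep b c) (hg : Good b) :
    Good c ∧ ∃ l : List (ℝ × ℝ), chainP b.pos l c.pos ∧ total c + lensum l = total b ∧
      ∀ y, W y c + consum y l ≤ W y b + (Rcnt y l : ℝ) := by
  obtain ⟨ht0, ht1, hD⟩ := hg
  cases h with
  | drive p' h =>
    refine ⟨⟨h, by show b.tank - |p' - b.pos| ≤ 1; linarith [abs_nonneg (p' - b.pos)], hD⟩,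
      [(b.pos, p')], ⟨rfl, rfl⟩, ?_, ?_⟩
    · simp [total, lensum]; ring
    · intro y
      have hk := key_drive b.pos p' b.tank y ht1 (by linarith)
      simp only [W, consum, Rcnt, seglen, List.map_cons, List.map_nil, List.sum_cons,
        List.sum_nil, List.countP_cons, List.countP_nil, decide_eq_true_eq]
      push_cast
      linarith [hk]
  | transfer t' D' hcons ht0' ht1' hD' heq =>
    refine ⟨⟨ht0', ht1', hD'⟩, [], rfl, ?_, ?_⟩
    · have hso := sum_off heq (fun _ a => a) (fun _ => rfl)
      simp only [total, lensum, List.map_nil, List.sum_nil]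
      rw [hso]; linarith
    · intro y
      have hso := sum_off heq (fun q a => if y < q then a else 0) (fun q => ite_self 0)
      simp only [W, consum, Rcnt, List.map_nil, List.sum_nil, List.countP_nil]
      rw [hso]
      by_cases hy : y < b.pos
      · simp only [hy, if_true]; push_cast; linarith
      · simp only [hy, if_false]; push_cast; linarith

lemma extract {s s' : JeepState} (h : Relation.ReflTransGen JeepStep s s') (hg : Good s) :
    Good s' ∧ ∃ l, chainP s.pos l s'.pos ∧ total s' + lensum l = total s ∧
      ∀ y, W y s' + consum y l ≤ W y s + (Rcnt y l : ℝ) := by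
  induction h with
  | refl => exact ⟨hg, [], rfl, by simp [lensum], fun y => by simp [consum, Rcnt]⟩
  | tail hab hbc ih =>
    obtain ⟨hgb, l, hch, htot, hw⟩ := ih
    obtain ⟨hgc, l', hch', htot', hw'⟩ := step_lemma hbc hgb
    refine ⟨hgc, l ++ l', chainP_append hch hch', ?_, ?_⟩
    · simp only [lensum, List.map_append, List.sum_append] at *
      linarith
    · intro y
      have h1 := hw y; have h2 := hw' y
      have e1 : consum y (l ++ l') = consum y l + consum y l' := by
        simp [consum]
      have e2 : (Rcnt y (l ++ l') : ℝ) = Rcnt y l + Rcnt y l' := by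
        simp [Rcnt, List.countP_append]
      rw [e1, e2]; linarith


lemma list_sum_eq {α M : Type*} [AddCommMonoid M] (l : List α) (f : α → M) (d : α) :
    (l.map f).sum = ∑ i ∈ Finset.range l.length, f (l.getD i d) := by
  induction l with
  | nil => simp
  | cons a t ih =>
    rw [List.map_cons, List.sum_cons, List.length_cons, Finset.sum_range_succ', ih]
    simp [add_comm]

lemma countP_eq {α : Type*} (l : List α) (p : α → Bool) (d : α) :
    l.countP p = ∑ i ∈ Finset.range l.length, (if p (l.getD i d) then 1 else 0) := by
  induction l with
  | nil => simp
  | cons a t ih =>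
    rw [List.countP_cons, List.length_cons, Finset.sum_range_succ', ih]
    simp

lemma seg_diff {α β : ℝ} (h : α ≤ β) (s : ℝ × ℝ) :
    min (max s.1 s.2) β - max (min s.1 s.2) α ≤ seglen α s - seglen β s := by
  have hlh : min s.1 s.2 ≤ max s.1 s.2 := min_le_max
  set lo := min s.1 s.2 with hlo
  set hi := max s.1 s.2 with hhi
  have e : ∀ y, seglen y s = hi - min hi (max lo y) := by
    intro y
    rw [seglen, ← hlo, ← hhi, max_comm lo y]
    rcases le_total (max y lo) hi with h' | h'
    · rw [max_eq_left (by linarith), min_eq_right h']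
    · rw [max_eq_right (by linarith), min_eq_left h']; ring
  rw [e, e]
  rcases le_or_gt (min hi β) (max lo α) with hc | hc
  · have h1 : min hi (max lo α) ≤ min hi (max lo β) :=
      min_le_min le_rfl (max_le_max_left _ h)
    linarith
  · have h2 : max lo β = β := max_eq_right ((le_max_left lo α).trans_lt
      (hc.trans_le (min_le_right _ _))).le
    have h3 : min hi (max lo α) = max lo α :=
      min_eq_right (hc.trans_le (min_le_left _ _)).le
    rw [h2, h3]; linarith

lemma count_le_indicator (l : List (ℝ × ℝ)) (z : ℝ)
    (hz : ∀ i ∈ Finset.range l.length, z ≠ min (l.getD i (0,0)).1 (l.getD i (0,0)).2) :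
    Rcnt z l + Lcnt z l ≤ ∑ i ∈ Finset.range l.length,
      (if z ∈ Set.Ioo (min (l.getD i (0,0)).1 (l.getD i (0,0)).2)
        (max (l.getD i (0,0)).1 (l.getD i (0,0)).2) then 1 else 0) := by
  rw [Rcnt, Lcnt, countP_eq _ _ (0,0), countP_eq _ _ (0,0), ← Finset.sum_add_distrib]
  refine Finset.sum_le_sum ?_
  intro i hi
  set s := l.getD i (0,0)
  have hne := hz i hi
  simp only [decide_eq_true_eq, Set.mem_Ioo]
  by_cases h1 : s.1 ≤ z ∧ z < s.2
  · have hic : ¬(s.2 ≤ z ∧ z < s.1) := by rintro ⟨a, b⟩; linarith [h1.1, h1.2]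
    have hm : min s.1 s.2 < z := by
      rcases lt_or_eq_of_le (min_le_left s.1 s.2) with h | h
      · exact lt_of_le_of_ne (le_trans (min_le_left _ _) h1.1) (Ne.symm hne)
      · exact lt_of_le_of_ne (le_trans (min_le_left _ _) h1.1) (Ne.symm hne)
    have hM : z < max s.1 s.2 := lt_of_lt_of_le h1.2 (le_max_right _ _)
    simp [h1, hic, hm, hM]
  · by_cases h2 : s.2 ≤ z ∧ z < s.1
    · have hm : min s.1 s.2 < z := by
        exact lt_of_le_of_ne (le_trans (min_le_right _ _) h2.1) (Ne.symm hne)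
      have hM : z < max s.1 s.2 := lt_of_lt_of_le h2.2 (le_max_left _ _)
      simp [h1, h2, hm, hM]
    · simp [h1, h2]

lemma measure_bound (l : List (ℝ × ℝ)) {α β : ℝ} (hαβ : α ≤ β) (m : ℕ)
    (hcnt : ∀ z, α < z → z < β → (∀ s ∈ l, z ≠ min s.1 s.2) → m ≤ Rcnt z l + Lcnt z l) :
    (m : ℝ) * (β - α) ≤ consum α l - consum β l := by
  classical
  set N := l.length with hN
  set lo : ℕ → ℝ := fun i => min (l.getD i (0,0)).1 (l.getD i (0,0)).2 with hlo
  set hi : ℕ → ℝ := fun i => max (l.getD i (0,0)).1 (l.getD i (0,0)).2 with hhi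
  -- a.e. pointwise bound
  have hbadm : MeasureTheory.volume (↑((Finset.range N).image lo) : Set ℝ) = 0 :=
    (Finset.finite_toSet _).measure_zero _
  have h0 : ∀ᵐ (z : ℝ) ∂MeasureTheory.volume, z ∉ (↑((Finset.range N).image lo) : Set ℝ) := by
    rw [MeasureTheory.ae_iff]
    simp only [not_not, Set.setOf_mem_eq]; exact hbadm
  have key : ∀ᵐ z ∂(MeasureTheory.volume.restrict (Set.Ioo α β)),
      (m : ℝ≥0∞) ≤ ∑ i ∈ Finset.range N, (Set.Ioo (lo i) (hi i)).indicator 1 z := by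
    filter_upwards [MeasureTheory.ae_restrict_of_ae h0,
      MeasureTheory.ae_restrict_mem measurableSet_Ioo] with z hz1 hz2
    have hz3 : ∀ i ∈ Finset.range N, z ≠ lo i := by
      intro i hi'
      intro hcontra
      exact hz1 (Finset.mem_coe.2 (Finset.mem_image.2 ⟨i, hi', hcontra.symm⟩))
    have hc1 : m ≤ Rcnt z l + Lcnt z l := by
      refine hcnt z hz2.1 hz2.2 ?_
      intro s hs
      obtain ⟨i, hiN, rfl⟩ := List.getElem_of_mem hs
      have e : l.getD i (0,0) = l[i] := List.getD_eq_getElem l (0,0) hiN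
      have h' : z ≠ (l.getD i (0,0)).1 ⊓ (l.getD i (0,0)).2 := hz3 i (Finset.mem_range.2 hiN)
      rwa [e] at h'
    have hc2 := count_le_indicator l z hz3
    have : (m : ℝ≥0∞) ≤ (∑ i ∈ Finset.range N, if z ∈ Set.Ioo (lo i) (hi i) then (1:ℕ) else 0 : ℕ) := by
      exact_mod_cast le_trans hc1 hc2
    refine le_trans this ?_
    push_cast
    refine le_of_eq (Finset.sum_congr rfl ?_)
    intro i _
    by_cases h : z ∈ Set.Ioo (lo i) (hi i) <;> simp [h, Set.indicator_apply]
  have meas : ∀ i ∈ Finset.range N,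
      Measurable ((Set.Ioo (lo i) (hi i)).indicator (fun _ => (1:ℝ≥0∞))) :=
    fun i _ => measurable_const.indicator measurableSet_Ioo
  have calc1 : (m : ℝ≥0∞) * MeasureTheory.volume (Set.Ioo α β) ≤
      ∑ i ∈ Finset.range N, MeasureTheory.volume (Set.Ioo (lo i) (hi i) ∩ Set.Ioo α β) := by
    calc (m : ℝ≥0∞) * MeasureTheory.volume (Set.Ioo α β)
        = ∫⁻ _ in Set.Ioo α β, (m : ℝ≥0∞) := by
          rw [MeasureTheory.setLIntegral_const]
      _ ≤ ∫⁻ z in Set.Ioo α β,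
            ∑ i ∈ Finset.range N, (Set.Ioo (lo i) (hi i)).indicator 1 z :=
          MeasureTheory.lintegral_mono_ae key
      _ = ∑ i ∈ Finset.range N,
            ∫⁻ z in Set.Ioo α β, (Set.Ioo (lo i) (hi i)).indicator 1 z :=
          MeasureTheory.lintegral_finset_sum _ (fun i hi' => meas i hi')
      _ = ∑ i ∈ Finset.range N, MeasureTheory.volume (Set.Ioo (lo i) (hi i) ∩ Set.Ioo α β) := by
          refine Finset.sum_congr rfl ?_
          intro i _
          rw [MeasureTheory.lintegral_indicator_one measurableSet_Ioo,
            MeasureTheory.Measure.restrict_apply measurableSet_Ioo]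
  rw [Real.volume_Ioo] at calc1
  have calc2 : ENNReal.ofReal ((m : ℝ) * (β - α)) ≤
      ENNReal.ofReal (∑ i ∈ Finset.range N, (seglen α (l.getD i (0,0)) - seglen β (l.getD i (0,0)))) := by
    have e1 : ENNReal.ofReal ((m : ℝ) * (β - α)) = (m : ℝ≥0∞) * ENNReal.ofReal (β - α) := by
      rw [ENNReal.ofReal_mul (by positivity)]
      simp
    rw [e1]
    refine le_trans calc1 ?_
    rw [ENNReal.ofReal_sum_of_nonneg (fun i _ => sub_nonneg.2 (seglen_anti _ hαβ))]
    refine Finset.sum_le_sum ?_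
    intro i _
    rw [Set.Ioo_inter_Ioo, Real.volume_Ioo]
    refine ENNReal.ofReal_le_ofReal ?_
    exact seg_diff hαβ (l.getD i (0,0))
  have hsum : ∑ i ∈ Finset.range N, (seglen α (l.getD i (0,0)) - seglen β (l.getD i (0,0)))
      = consum α l - consum β l := by
    simp only [consum]
    rw [list_sum_eq _ (seglen α) (0,0), list_sum_eq _ (seglen β) (0,0), Finset.sum_sub_distrib]
  rw [hsum] at calc2
  have hrhs : 0 ≤ consum α l - consum β l := by
    rw [← hsum]
    exact Finset.sum_nonneg (fun i _ => sub_nonneg.2 (seglen_anti _ hαβ))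
  exact (ENNReal.ofReal_le_ofReal_iff hrhs).1 calc2


lemma abel (m : ℕ) (b : ℕ → ℝ) (hb0 : b 0 = 0) (hbk : ∀ k, 1 ≤ k → k ≤ m → b k ≤ k) :
    ∑ i ∈ Finset.range (m+1), (b (i+1) - b i)/(2*((i:ℝ)+1)) ≤
      (∑ k ∈ Finset.Icc 1 m, 1/(2*(k:ℝ))) + (b (m+1) - m)/(2*((m:ℝ)+1)) := by
  induction m with
  | zero => simp [hb0]
  | succ m ih =>
    have ih' := ih (fun k h1 h2 => hbk k h1 (h2.trans (Nat.le_succ m)))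
    rw [Finset.sum_range_succ, Finset.sum_Icc_succ_top (Nat.le_add_left 1 m)]
    have hbm : b (m+1) ≤ ((m:ℝ)+1) := by
      have := hbk (m+1) (Nat.le_add_left 1 m) le_rfl
      push_cast at this; linarith
    have h1 : (0:ℝ) < (m:ℝ)+1 := by positivity
    have h2 : (0:ℝ) < (m:ℝ)+2 := by positivity
    have key : (b (m+1) - ((m:ℝ)+1))/(2*((m:ℝ)+1)) ≤ (b (m+1) - ((m:ℝ)+1))/(2*((m:ℝ)+2)) := by
      rw [div_le_div_iff₀ (by positivity) (by positivity)]
      nlinarith [hbm]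
    push_cast
    push_cast at ih'
    have e2 : ((m:ℝ)+1+1) = (m:ℝ)+2 := by ring
    rw [e2]
    have e3 : b (m+1+1) = b (m+2) := by norm_num
    rw [e3]
    have exp1 : (b (m+1) - (m:ℝ))/(2*((m:ℝ)+1)) =
        (b (m+1) - ((m:ℝ)+1))/(2*((m:ℝ)+1)) + 1/(2*((m:ℝ)+1)) := by
      field_simp
      ring
    have exp2 : (b (m+2) - b (m+1))/(2*((m:ℝ)+2)) =
        (b (m+2) - ((m:ℝ)+1))/(2*((m:ℝ)+2)) - (b (m+1) - ((m:ℝ)+1))/(2*((m:ℝ)+2)) := by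
      field_simp
      ring
    linarith [ih', key, exp1, exp2]

lemma ceil_pos_facts {x : ℝ} (hx : 1 ≤ x) :
    1 ≤ ⌈x⌉₊ ∧ x ≤ (⌈x⌉₊ : ℝ) ∧ ((⌈x⌉₊ : ℝ) - 1) < x := by
  have h0 : (0:ℝ) ≤ x := by linarith
  refine ⟨?_, Nat.le_ceil x, ?_⟩
  · exact Nat.one_le_ceil_iff.2 (by linarith)
  · have := Nat.ceil_lt_add_one h0
    linarith

lemma G_nonneg {x : ℝ} (hx : 1 ≤ x) : 0 ≤ G x := by
  obtain ⟨h1, h2, h3⟩ := ceil_pos_facts hx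
  have hn : (0:ℝ) < (⌈x⌉₊ : ℝ) := by exact_mod_cast h1
  have : 0 ≤ (x - ⌈x⌉₊ + 1) / (2 * (⌈x⌉₊ : ℝ)) := by
    apply div_nonneg _ (by positivity)
    linarith
  have hsum : 0 ≤ ∑ k ∈ Finset.Icc 1 (⌈x⌉₊ - 1), 1 / (2 * (k : ℝ)) := by
    apply Finset.sum_nonneg
    intro k hk
    have : 0 < k := by
      have := (Finset.mem_Icc.1 hk).1; omega
    positivity
  unfold G; linarith


lemma W_nonneg {y : ℝ} {s : JeepState} (hg : Good s) : 0 ≤ W y s := by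
  obtain ⟨ht0, _, hD⟩ := hg
  refine add_nonneg ?_ (Finset.sum_nonneg ?_)
  · split_ifs <;> [exact ht0; exact le_refl 0]
  · intro q _
    split_ifs <;> [exact hD q; exact le_refl 0]

lemma total_nonneg {s : JeepState} (hg : Good s) : 0 ≤ total s :=
  add_nonneg hg.1 (Finset.sum_nonneg (fun q _ => hg.2.2 q))

lemma W_init (x : ℝ) {y : ℝ} (hy : 0 ≤ y) : W y (jeepInit x) = 0 := by
  rw [W]
  have h1 : (if y < (jeepInit x).pos then (jeepInit x).tank else 0) = 0 := by
    simp [jeepInit, not_lt.2 hy]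
  rw [h1]
  have h2 : ∀ q ∈ (jeepInit x).depot.support,
      (if y < q then (jeepInit x).depot q else 0) = 0 := by
    intro q hq
    have : q = 0 := by
      have := Finsupp.support_single_subset hq
      simpa [jeepInit] using Finsupp.support_single_subset (by simpa [jeepInit] using hq)
    rw [this, if_neg (not_lt.2 hy)]
  rw [Finset.sum_eq_zero h2, add_zero]

lemma total_init {x : ℝ} (hx : 1 ≤ x) : total (jeepInit x) = x := by
  have hx0 : x ≠ 0 := by intro h; rw [h] at hx; linarith
  simp [total, jeepInit, Finsupp.support_single_ne_zero _ hx0]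

lemma main_core (x d : ℝ) (hx : 1 ≤ x) (hd0 : 0 < d) (l₁ l₂ : List (ℝ × ℝ))
    (hch1 : chainP 0 l₁ d) (hch2 : chainP d l₂ 0)
    (hFR : ∀ y, 0 ≤ y → consum y (l₁ ++ l₂) ≤ (Rcnt y (l₁ ++ l₂) : ℝ))
    (hF0 : consum 0 (l₁ ++ l₂) ≤ x) : d ≤ G x := by
  classical
  obtain ⟨hn1, hnx, hxn⟩ := ceil_pos_facts hx
  set n := ⌈x⌉₊ with hn
  set l := l₁ ++ l₂ with hl
  set F : ℝ → ℝ := fun y => consum y l with hF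
  have hch : chainP 0 l 0 := chainP_append hch1 hch2
  have hFanti : ∀ ⦃u v : ℝ⦄, u ≤ v → F v ≤ F u := fun u v h => consum_anti l h
  have hFnn : ∀ y, 0 ≤ F y := fun y => consum_nonneg y l
  have hRL : ∀ z, 0 ≤ z → Lcnt z l = Rcnt z l := by
    intro z hz
    have h1 := chainP_RL hch z
    rw [if_neg (not_lt.2 hz)] at h1
    exact_mod_cast h1.symm
  have hR1 : ∀ z, 0 ≤ z → z < d → 1 ≤ Rcnt z l := by
    intro z hz hzd
    have h1 := chainP_cross hch1 hz hzd
    have h2 : Rcnt z l = Rcnt z l₁ + Rcnt z l₂ := by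
      simp [Rcnt, hl, List.countP_append]
    omega
  have hRk : ∀ (k : ℕ) z, 0 ≤ z → (k:ℝ) - 1 < F z → k ≤ Rcnt z l := by
    intro k z hz hkF
    have h1 := hFR z hz
    have h2 : (k:ℝ) < (Rcnt z l : ℝ) + 1 := by
      have : consum z l ≤ (Rcnt z l : ℝ) := h1
      simp only [hF] at hkF
      linarith
    have : k < Rcnt z l + 1 := by exact_mod_cast h2
    omega
  set S : ℕ → Set ℝ := fun k => {y | y ∈ Set.Icc 0 d ∧ F y ≤ (k:ℝ)} ∪ {d} with hS
  have hSne : ∀ k, (S k).Nonempty := fun k => ⟨d, Or.inr rfl⟩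
  have hSbdd : ∀ k, BddBelow (S k) := by
    intro k
    refine ⟨0, ?_⟩
    rintro y (⟨hy, _⟩ | rfl)
    · exact hy.1
    · exact hd0.le
  have hSclosed : ∀ k, IsClosed (S k) := by
    intro k
    refine IsClosed.union ?_ isClosed_singleton
    have he : {y | y ∈ Set.Icc 0 d ∧ F y ≤ (k:ℝ)} = Set.Icc 0 d ∩ F ⁻¹' (Set.Iic (k:ℝ)) := rfl
    rw [he]
    exact isClosed_Icc.inter (IsClosed.preimage (consum_cont l) isClosed_Iic)
  set a : ℕ → ℝ := fun k => if k = 0 then d else sInf (S k) with ha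
  have haeq : ∀ k, 1 ≤ k → a k = sInf (S k) := by
    intro k hk
    simp [ha, Nat.one_le_iff_ne_zero.1 hk]
  have hmem : ∀ k, 1 ≤ k → a k ∈ S k := by
    intro k hk
    rw [haeq k hk]
    exact (hSclosed k).csInf_mem (hSne k) (hSbdd k)
  have h0le : ∀ k, 0 ≤ a k := by
    intro k
    rcases Nat.eq_zero_or_pos k with rfl | hk
    · simp [ha]; exact hd0.le
    · rcases hmem k hk with ⟨hy, _⟩ | h
      · exact hy.1
      · rw [h]; exact hd0.le
  have hled : ∀ k, a k ≤ d := by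
    intro k
    rcases Nat.eq_zero_or_pos k with rfl | hk
    · simp [ha]
    · rw [haeq k hk]
      exact csInf_le (hSbdd k) (Or.inr rfl)
  have hanti : ∀ k, 1 ≤ k → a k ≤ a (k-1) := by
    intro k hk
    rcases Nat.eq_zero_or_pos (k-1) with h0 | hpos
    · rw [h0]
      have : a 0 = d := by simp [ha]
      rw [this]
      exact hled k
    · rw [haeq k hk, haeq (k-1) hpos]
      refine csInf_le_csInf (hSbdd k) (hSne (k-1)) ?_
      rintro y (⟨hy, hFy⟩ | rfl)
      · refine Or.inl ⟨hy, le_trans hFy ?_⟩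
        have : ((k:ℕ) - 1 : ℕ) ≤ k := Nat.sub_le k 1
        exact_mod_cast Nat.cast_le.2 this
      · exact Or.inr rfl
  have han : a n = 0 := by
    have h0mem : (0:ℝ) ∈ S n := by
      refine Or.inl ⟨⟨le_refl 0, hd0.le⟩, ?_⟩
      show F 0 ≤ (n:ℝ)
      exact le_trans hF0 hnx
    refine le_antisymm ?_ (h0le n)
    rw [haeq n hn1]
    exact csInf_le (hSbdd n) h0mem
  set b : ℕ → ℝ := fun k => if k = 0 then 0 else if n ≤ k then x else min (F (a k)) k with hb
  have hb0 : b 0 = 0 := by simp [hb]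
  have hbk : ∀ k, 1 ≤ k → k ≤ n - 1 → b k ≤ k := by
    intro k h1 h2
    have hkn : ¬ n ≤ k := by omega
    simp only [hb, Nat.one_le_iff_ne_zero.1 h1, if_false, hkn]
    exact min_le_right _ _
  have hint : ∀ k, 1 ≤ k → k ≤ n → a (k-1) - a k ≤ (b k - b (k-1))/(2*(k:ℝ)) := by
    intro k hk1 hkn
    have hk0 : (0:ℝ) < 2*(k:ℝ) := by positivity
    have hab : a k ≤ a (k-1) := hanti k hk1
    have hmb : ((2*k : ℕ):ℝ) * (a (k-1) - a k) ≤ consum (a k) l - consum (a (k-1)) l := by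
      apply measure_bound l hab (2*k)
      intro z hz1 hz2 _
      have hz0 : 0 ≤ z := le_trans (h0le k) hz1.le
      have hzd : z < d := lt_of_lt_of_le hz2 (hled (k-1))
      have hRz : k ≤ Rcnt z l := by
        rcases eq_or_lt_of_le hk1 with h1 | h1
        · rw [← h1]
          exact hR1 z hz0 hzd
        · have hk1' : 1 ≤ k - 1 := by omega
          have hnotmem : z ∉ S (k-1) := by
            intro hmem'
            have h3 : sInf (S (k-1)) ≤ z := csInf_le (hSbdd (k-1)) hmem'
            rw [← haeq (k-1) hk1'] at h3
            linarith
          have hFz : (k:ℝ) - 1 < F z := by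
            by_contra hcon
            push_neg at hcon
            apply hnotmem
            refine Or.inl ⟨⟨hz0, hzd.le⟩, ?_⟩
            show F z ≤ ((k - 1 : ℕ):ℝ)
            have : ((k - 1 : ℕ):ℝ) = (k:ℝ) - 1 := by
              push_cast [hk1]; ring
            rw [this]
            exact hcon
          exact hRk k z hz0 hFz
      have hLz := hRL z hz0
      omega
    have hFb : consum (a k) l - consum (a (k-1)) l ≤ b k - b (k-1) := by
      rcases eq_or_lt_of_le (hled k) with hdk | hdk
      · have hdk1 : a (k-1) = d := le_antisymm (hled _) (by rw [← hdk]; exact hab)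
        have hbmono : b (k-1) ≤ b k := by
          rcases Nat.eq_zero_or_pos (k-1) with h0 | hpos
          · rw [h0, hb0]
            by_cases hnk : n ≤ k
            · simp only [hb, Nat.one_le_iff_ne_zero.1 hk1, if_false, if_pos hnk]
              linarith
            · simp only [hb, Nat.one_le_iff_ne_zero.1 hk1, if_false, if_neg hnk]
              exact le_min (hFnn _) (by positivity)
          · by_cases hnk : n ≤ k
            · by_cases hnk1 : n ≤ k - 1
              · simp only [hb, Nat.one_le_iff_ne_zero.1 hk1, Nat.one_le_iff_ne_zero.1 hpos,
                  if_false, if_pos hnk, if_pos hnk1]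
                exact le_rfl
              · simp only [hb, Nat.one_le_iff_ne_zero.1 hk1, Nat.one_le_iff_ne_zero.1 hpos,
                  if_false, if_pos hnk, if_neg hnk1]
                have hkr : ((k-1 : ℕ):ℝ) ≤ (n:ℝ) - 1 := by
                  have : k - 1 ≤ n - 1 := by omega
                  have h2 : ((k-1:ℕ):ℝ) ≤ ((n-1:ℕ):ℝ) := by exact_mod_cast this
                  have h3 : ((n-1:ℕ):ℝ) = (n:ℝ) - 1 := by push_cast [hn1]; ring
                  linarith
                exact le_trans (min_le_right _ _) (by linarith)
            · have hnk1 : ¬ n ≤ k - 1 := by omega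
              simp only [hb, Nat.one_le_iff_ne_zero.1 hk1, Nat.one_le_iff_ne_zero.1 hpos,
                if_false, if_neg hnk, if_neg hnk1]
              refine le_min ?_ ?_
              · exact le_trans (min_le_left _ _) (hFanti hab)
              · refine le_trans (min_le_right _ _) ?_
                exact_mod_cast Nat.cast_le.2 (Nat.sub_le k 1)
        rw [hdk, hdk1]
        simp only [sub_self]
        linarith
      · have hmemk := hmem k hk1
        have hFak : F (a k) ≤ (k:ℝ) ∧ a k ∈ Set.Icc 0 d := by
          rcases hmemk with ⟨h1, h2⟩ | h
          · exact ⟨h2, h1⟩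
          · exact absurd h (ne_of_lt hdk)
        have hup : F (a k) ≤ b k := by
          by_cases hnk : n ≤ k
          · have hkeq : k = n := le_antisymm hkn hnk
            simp only [hb, Nat.one_le_iff_ne_zero.1 hk1, if_false, if_pos hnk]
            subst hkeq
            rw [han]
            exact hF0
          · simp only [hb, Nat.one_le_iff_ne_zero.1 hk1, if_false, if_neg hnk]
            exact le_min le_rfl hFak.1
        have hdown : b (k-1) ≤ F (a (k-1)) := by
          rcases Nat.eq_zero_or_pos (k-1) with h0 | hpos
          · rw [h0, hb0]
            exact hFnn _
          · have hnk1 : ¬ n ≤ k - 1 := by omega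
            simp only [hb, Nat.one_le_iff_ne_zero.1 hpos, if_false, if_neg hnk1]
            exact min_le_left _ _
        show consum (a k) l - consum (a (k-1)) l ≤ b k - b (k-1)
        have e1 : consum (a k) l = F (a k) := rfl
        have e2 : consum (a (k-1)) l = F (a (k-1)) := rfl
        rw [e1, e2]
        linarith
    rw [le_div_iff₀ hk0]
    have hcast : ((2*k : ℕ):ℝ) = 2*(k:ℝ) := by push_cast; ring
    rw [hcast] at hmb
    nlinarith [hmb, hFb]
  have htel : d = ∑ i ∈ Finset.range n, (a i - a (i+1)) := by
    rw [Finset.sum_range_sub' a n]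
    have h1 : a 0 = d := by simp [ha]
    rw [h1, han, sub_zero]
  have hsum : d ≤ ∑ i ∈ Finset.range n, (b (i+1) - b i)/(2*((i:ℝ)+1)) := by
    rw [htel]
    refine Finset.sum_le_sum ?_
    intro i hi
    have h1 := hint (i+1) (by omega) (Finset.mem_range.1 hi)
    simpa using h1
  have habel := abel (n-1) b hb0 (fun k h1 h2 => hbk k h1 h2)
  have hnn : n - 1 + 1 = n := Nat.succ_pred_eq_of_pos hn1
  rw [hnn] at habel
  have hbn : b n = x := by
    simp [hb, Nat.one_le_iff_ne_zero.1 hn1, le_refl]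
  rw [hbn] at habel
  have hc1 : ((n-1:ℕ):ℝ) = (n:ℝ) - 1 := by push_cast [hn1]; ring
  rw [hc1] at habel
  have hGx : G x = (∑ k ∈ Finset.Icc 1 (n - 1), 1 / (2 * (k : ℝ))) +
      (x - (n:ℝ) + 1) / (2 * (n : ℝ)) := by
    rw [G, hn]
  have hfinal : (x - ((n:ℝ) - 1)) / (2 * ((n:ℝ) - 1 + 1)) = (x - (n:ℝ) + 1) / (2 * (n:ℝ)) := by
    ring_nf
  calc d ≤ ∑ i ∈ Finset.range n, (b (i+1) - b i)/(2*((i:ℝ)+1)) := hsum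
    _ ≤ (∑ k ∈ Finset.Icc 1 (n-1), 1/(2*(k:ℝ))) + (x - ((n:ℝ) - 1))/(2*((n:ℝ)-1+1)) := habel
    _ = G x := by rw [hfinal, hGx]

end JeepAux

/-- For every `x ≥ 1` and every plan with `x` tankloads, if the plan reaches a
state with jeep position `d` and subsequently a state with jeep position `0`,
then `d ≤ G x`: a round trip cannot go farther than `G x`. -/
theorem jeep_roundtrip_bound (x : ℝ) (hx : 1 ≤ x) (d : ℝ)
    (s₁ s₂ : JeepState)
    (h₁ : Relation.ReflTransGen JeepStep (jeepInit x) s₁)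
    (h₂ : Relation.ReflTransGen JeepStep s₁ s₂)
    (hd : s₁.pos = d) (h0 : s₂.pos = 0) :
    d ≤ G x := by
  classical
  by_cases hd0 : d ≤ 0
  · exact hd0.trans (JeepAux.G_nonneg hx)
  push_neg at hd0
  have hgood : JeepAux.Good (jeepInit x) := by
    refine ⟨le_refl 0, zero_le_one, fun q => ?_⟩
    show 0 ≤ Finsupp.single (0:ℝ) x q
    rw [Finsupp.single_apply]
    split_ifs
    · linarith
    · exact le_refl 0
  obtain ⟨hg1, l₁, hch1, htot1, hw1⟩ := JeepAux.extract h₁ hgood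
  obtain ⟨hg2, l₂, hch2, htot2, hw2⟩ := JeepAux.extract h₂ hg1
  have hpos1 : JeepAux.chainP 0 l₁ d := by
    rw [← hd]
    exact hch1
  have hpos2 : JeepAux.chainP d l₂ 0 := by
    rw [← hd, ← h0]
    exact hch2
  refine JeepAux.main_core x d hx hd0 l₁ l₂ hpos1 hpos2 ?_ ?_
  · intro y hy
    have hA := hw1 y
    have hB := hw2 y
    have hWinit : JeepAux.W y (jeepInit x) = 0 := JeepAux.W_init x hy
    have hW2 : 0 ≤ JeepAux.W y s₂ := JeepAux.W_nonneg hg2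
    have e1 : JeepAux.consum y (l₁ ++ l₂) = JeepAux.consum y l₁ + JeepAux.consum y l₂ := by
      simp [JeepAux.consum]
    have e2 : (JeepAux.Rcnt y (l₁ ++ l₂) : ℝ) = JeepAux.Rcnt y l₁ + JeepAux.Rcnt y l₂ := by
      simp [JeepAux.Rcnt, List.countP_append]
    rw [e1, e2]
    linarith
  · have e3 : JeepAux.lensum (l₁ ++ l₂) = JeepAux.lensum l₁ + JeepAux.lensum l₂ := by
      simp [JeepAux.lensum]
    have h4 := JeepAux.consum_le_lensum 0 (l₁ ++ l₂)
    have h5 := JeepAux.total_nonneg hg2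
    have h6 : JeepAux.total (jeepInit x) = x := JeepAux.total_init hx
    linarith
end
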